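/- Let L be a finite-dimensional Lie algebra, c ∈ L an absolute zero divisor ((ad c)^2 = 0), and H a Cartan subalgebra (self-normalizing nilpotent subalgebra) containing C_L(c), with Fitting decomposition L = H ⊕ L₁ with respect to H. Then assuming c ≠ 0 and C_L(c) ⊆ H one derives L = H, i.e., L is nilpotent. Equivalently: in a non-nilpotent Lie algebra, the centralizer of a nonzero absolute zero divisor is never contained in a Cartan subalgebra H with [L₁, c] forced into H. -/

import Mathlib

/-- If `c` is a nonzero absolute zero divisor of a finite-dimensional Lie algebra `L` whose
centralizer is contained in a Cartan subalgebra `H`, then `L = H` (so `L` is nilpotent). -/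
theorem azd_centralizer_in_cartan_implies_nilpotent
    (K L : Type*) [Field K] [LieRing L] [LieAlgebra K L] [Module.Finite K L]
    (H : LieSubalgebra K L) [H.IsCartanSubalgebra]
    (c : L) (hc : c ≠ 0) (hazd : (LieAlgebra.ad K L c) ^ 2 = 0)
    (hcent : ∀ y : L, ⁅y, c⁆ = 0 → y ∈ H) :
    H = ⊤ := by
  -- `c ∈ H` since `⁅c, c⁆ = 0`.
  have hcH : c ∈ H := hcent c (lie_self c)
  -- Fitting decomposition of `L` as an `H`-module.
  have hcompl := LieModule.isCompl_genWeightSpace_zero_posFittingComp K H L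
  have hzero : LieModule.genWeightSpace L (0 : H → K) = H.toLieSubmodule :=
    LieAlgebra.rootSpace_zero_eq K L H
  -- The positive Fitting component is contained in `H`.
  have hpos : LieModule.posFittingComp K H L ≤ H.toLieSubmodule := by
    intro m hm
    -- `⁅(⟨c, hcH⟩ : H), m⁆ ∈ posFittingComp` and also `∈ H` (since `(ad c)^2 = 0`).
    have h1 : ⁅(⟨c, hcH⟩ : H), m⁆ ∈ LieModule.posFittingComp K H L :=
      (LieModule.posFittingComp K H L).lie_mem hm
    have h2 : ⁅(⟨c, hcH⟩ : H), m⁆ ∈ H.toLieSubmodule := by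
      have : ⁅⁅c, m⁆, c⁆ = 0 := by
        have := congrFun (congrArg DFunLike.coe hazd) m
        simp only [pow_two, Module.End.mul_apply, LieAlgebra.ad_apply,
          LinearMap.zero_apply] at this
        rw [← lie_skew]
        simp [this]
      have := hcent _ this
      simpa [LieSubalgebra.mem_toLieSubmodule] using this
    have h3 : ⁅(⟨c, hcH⟩ : H), m⁆ = 0 := by
      rw [← hzero] at h2
      have := hcompl.disjoint.le_bot ⟨h2, h1⟩
      simpa using this
    -- So `⁅m, c⁆ = 0`, hence `m ∈ H`.
    have h4 : ⁅m, c⁆ = 0 := by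
      have : ⁅c, m⁆ = 0 := h3
      rw [← lie_skew, this, neg_zero]
    simpa [LieSubalgebra.mem_toLieSubmodule] using hcent m h4
  -- Conclude.
  have htop : H.toLieSubmodule = ⊤ := by
    have := hcompl.codisjoint.eq_top
    rw [hzero] at this
    exact le_antisymm le_top (by rw [← this]; exact sup_le le_rfl hpos)
  have : (H : Submodule K L) = ⊤ := by
    have := congrArg (LieSubmodule.toSubmodule) htop
    simpa using this
  exact LieSubalgebra.toSubmodule_injective (by simpa using this)
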